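/- For every positive integer n, √(2πn)·(n/e)^n·exp(1/(12n+1)) < Γ(n+1) < √(2πn)·(n/e)^n·exp(1/(12n)). -/

import Mathlib

open Filter Real Stirling

namespace RobbinsAux

lemma pow_three_ge (k : ℕ) : (2 * (k : ℝ) + 3) ≤ 3 ^ (k + 1) := by
  induction k with
  | zero => norm_num
  | succ k ih =>
    have h3 : (0:ℝ) ≤ 3 ^ (k+1) := by positivity
    push_cast at ih ⊢
    rw [show k + 1 + 1 = (k+1) + 1 from rfl, pow_succ]
    nlinarith [Nat.cast_nonneg (α := ℝ) k]

lemma upper_step (m : ℕ) :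
    Real.log (stirlingSeq (m + 1)) - Real.log (stirlingSeq (m + 2)) <
      1 / (12 * ((m : ℝ) + 1)) - 1 / (12 * ((m : ℝ) + 2)) := by
  set c : ℝ := (m : ℝ) with hc
  have hc0 : 0 ≤ c := Nat.cast_nonneg m
  set x : ℝ := ((1 : ℝ) / (2 * (↑(m + 1) : ℝ) + 1)) ^ 2 with hx
  have hxc : x = (1 / (2 * c + 3)) ^ 2 := by rw [hx]; push_cast; ring_nf; rw [hc]
  have ht : (0:ℝ) < 2 * c + 3 := by linarith
  have hx0 : 0 < x := by rw [hxc]; positivity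
  have hx1 : x < 1 := by
    rw [hxc, div_pow, one_pow, div_lt_one (by positivity)]
    nlinarith
  have hf := Stirling.log_stirlingSeq_diff_hasSum m
  rw [← hx] at hf
  have G : HasSum (fun k : ℕ => (1/3 : ℝ) * x ^ (k+1)) ((1/3 * x) * (1 - x)⁻¹) := by
    have := (hasSum_geometric_of_lt_one hx0.le hx1).mul_left ((1/3 : ℝ) * x)
    convert this using 2 with k
    rfl
    ring
  have hle : ∀ k : ℕ, (1 : ℝ) / (2 * ↑(k + 1) + 1) * x ^ (k + 1) ≤ (1/3 : ℝ) * x ^ (k+1) := by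
    intro k
    have hk : (1:ℝ) / (2 * ↑(k + 1) + 1) ≤ 1/3 := by
      apply one_div_le_one_div_of_le (by norm_num)
      push_cast; linarith [Nat.cast_nonneg (α := ℝ) k]
    exact mul_le_mul_of_nonneg_right hk (by positivity)
  have hlt := hasSum_lt hle (i := 1) (by
    have hx2 : (0:ℝ) < x ^ 2 := by positivity
    push_cast
    norm_num
    nlinarith) hf G
  refine hlt.trans_le (le_of_eq ?_)
  have h1x : 1 - x ≠ 0 := by intro h; rw [sub_eq_zero] at h; exact hx1.ne h.symm
  have h2 : (2*c+3 : ℝ) ≠ 0 := ht.ne'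
  have hA : (12*(c+1):ℝ) ≠ 0 := by positivity
  have hB : (12*(c+2):ℝ) ≠ 0 := by positivity
  rw [hxc] at h1x ⊢
  rw [mul_assoc, ← div_eq_mul_inv, div_sub_div _ _ hA hB, ← mul_div_assoc,
    div_eq_div_iff h1x (mul_ne_zero hA hB)]
  field_simp
  ring

lemma lower_step (m : ℕ) :
    1 / (12 * ((m : ℝ) + 1) + 1) - 1 / (12 * ((m : ℝ) + 2) + 1) <
      Real.log (stirlingSeq (m + 1)) - Real.log (stirlingSeq (m + 2)) := by
  set c : ℝ := (m : ℝ) with hc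
  have hc0 : 0 ≤ c := Nat.cast_nonneg m
  set x : ℝ := ((1 : ℝ) / (2 * (↑(m + 1) : ℝ) + 1)) ^ 2 with hx
  have hxc : x = (1 / (2 * c + 3)) ^ 2 := by rw [hx]; push_cast; ring_nf; rw [hc]
  have ht : (0:ℝ) < 2 * c + 3 := by linarith
  have hx0 : 0 < x := by rw [hxc]; positivity
  have hx1 : x < 1 := by
    rw [hxc, div_pow, one_pow, div_lt_one (by positivity)]
    nlinarith
  have hx3 : x / 3 < 1 := by linarith
  have hg := Stirling.log_stirlingSeq_diff_hasSum m
  rw [← hx] at hg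
  have G : HasSum (fun k : ℕ => (x/3) ^ (k+1)) ((x/3) * (1 - x/3)⁻¹) := by
    have := (hasSum_geometric_of_lt_one (by positivity) hx3).mul_left (x/3)
    convert this using 2 with k
    rfl
    ring
  have hle : ∀ k : ℕ, (x/3) ^ (k+1) ≤ (1 : ℝ) / (2 * ↑(k + 1) + 1) * x ^ (k + 1) := by
    intro k
    have hxp : (0:ℝ) ≤ x ^ (k+1) := by positivity
    rw [div_pow, one_div_mul_eq_div]
    exact div_le_div_of_nonneg_left hxp (by positivity)
      (by push_cast; linarith [pow_three_ge k])
  have hlt := hasSum_lt hle (i := 1) (by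
    have hx2 : (0:ℝ) < x ^ 2 := by positivity
    rw [div_pow]
    push_cast
    norm_num
    nlinarith) G hg
  refine lt_of_lt_of_le ?_ hlt.le
  have h1x : (0:ℝ) < 1 - x/3 := by linarith
  have key : (x/3) * (1 - x/3)⁻¹ = 1 / (12*c^2 + 36*c + 26) := by
    have hden : (12*c^2 + 36*c + 26 : ℝ) ≠ 0 := by positivity
    rw [hxc] at h1x ⊢
    have h2 : (2*c+3 : ℝ) ≠ 0 := ht.ne'
    rw [← div_eq_mul_inv, div_eq_div_iff h1x.ne' hden]
    field_simp
    ring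
  rw [key]
  have e2 : 1 / (12 * (c + 1) + 1) - 1 / (12 * (c + 2) + 1)
      = 12 / ((12*c + 13) * (12*c + 25)) := by
    field_simp
    ring
  rw [e2, div_lt_div_iff₀ (by positivity) (by positivity)]
  nlinarith

end RobbinsAux

set_option maxHeartbeats 2000000 in
theorem stirling_bounds (n : ℕ) (hn : 0 < n) :
    Real.sqrt (2 * Real.pi * n) * ((n : ℝ) / Real.exp 1) ^ n *
        Real.exp (1 / (12 * (n : ℝ) + 1)) < Real.Gamma ((n : ℝ) + 1) ∧
    Real.Gamma ((n : ℝ) + 1) <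
      Real.sqrt (2 * Real.pi * n) * ((n : ℝ) / Real.exp 1) ^ n *
        Real.exp (1 / (12 * (n : ℝ))) := by
  have hpi : (0:ℝ) < Real.sqrt Real.pi := Real.sqrt_pos.mpr Real.pi_pos
  set L := Real.log (Real.sqrt Real.pi) with hL
  have hlogS : Tendsto (fun k : ℕ => Real.log (stirlingSeq (k + 1))) atTop (nhds L) := by
    have h0 : Tendsto (fun k : ℕ => stirlingSeq (k + 1)) atTop (nhds (Real.sqrt Real.pi)) :=
      Stirling.tendsto_stirlingSeq_sqrt_pi.comp (tendsto_add_atTop_nat 1)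
    exact ((Real.continuousAt_log hpi.ne').tendsto).comp h0
  have htop : Tendsto (fun k : ℕ => 12 * ((k:ℝ) + 1)) atTop atTop :=
    (tendsto_atTop_add_const_right _ 1 tendsto_natCast_atTop_atTop).const_mul_atTop
      (by norm_num : (0:ℝ) < 12)
  have hz : Tendsto (fun k : ℕ => 1 / (12 * ((k:ℝ) + 1))) atTop (nhds 0) := by
    simp only [one_div]
    exact htop.inv_tendsto_atTop
  have htop' : Tendsto (fun k : ℕ => 12 * ((k:ℝ) + 1) + 1) atTop atTop :=
    tendsto_atTop_add_const_right _ 1 htop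
  have hz' : Tendsto (fun k : ℕ => 1 / (12 * ((k:ℝ) + 1) + 1)) atTop (nhds 0) := by
    simp only [one_div]
    exact htop'.inv_tendsto_atTop
  have hu_mono : StrictMono (fun k : ℕ =>
      Real.log (stirlingSeq (k + 1)) - 1 / (12 * ((k:ℝ) + 1))) := by
    apply strictMono_nat_of_lt_succ
    intro k
    have h := RobbinsAux.upper_step k
    have e1 : ((k:ℝ) + 1) + 1 = (k:ℝ) + 2 := by ring
    simp only [Nat.cast_add, Nat.cast_one, e1]
    linarith
  have hu_tend : Tendsto (fun k : ℕ =>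
      Real.log (stirlingSeq (k + 1)) - 1 / (12 * ((k:ℝ) + 1))) atTop (nhds L) := by
    simpa using hlogS.sub hz
  have hu_lt : ∀ k : ℕ, Real.log (stirlingSeq (k + 1)) - 1 / (12 * ((k:ℝ) + 1)) < L :=
    fun k => lt_of_lt_of_le (hu_mono (Nat.lt_succ_self k))
      (hu_mono.monotone.ge_of_tendsto hu_tend (k+1))
  have hv_anti : StrictAnti (fun k : ℕ =>
      Real.log (stirlingSeq (k + 1)) - 1 / (12 * ((k:ℝ) + 1) + 1)) := by
    apply strictAnti_nat_of_succ_lt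
    intro k
    have h := RobbinsAux.lower_step k
    have e1 : ((k:ℝ) + 1) + 1 = (k:ℝ) + 2 := by ring
    simp only [Nat.cast_add, Nat.cast_one, e1]
    linarith
  have hv_tend : Tendsto (fun k : ℕ =>
      Real.log (stirlingSeq (k + 1)) - 1 / (12 * ((k:ℝ) + 1) + 1)) atTop (nhds L) := by
    simpa using hlogS.sub hz'
  have hv_gt : ∀ k : ℕ, L < Real.log (stirlingSeq (k + 1)) - 1 / (12 * ((k:ℝ) + 1) + 1) :=
    fun k => lt_of_le_of_lt (hv_anti.antitone.le_of_tendsto hv_tend (k+1))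
      (hv_anti (Nat.lt_succ_self k))
  obtain ⟨m, rfl⟩ : ∃ m, n = m + 1 := ⟨n - 1, (Nat.succ_pred_eq_of_pos hn).symm⟩
  set nn : ℕ := m + 1 with hnn
  have hn' : (0:ℝ) < (nn:ℝ) := by exact_mod_cast hn
  have hs : 0 < stirlingSeq nn := Stirling.stirlingSeq'_pos m
  have hD : 0 < Real.sqrt (2 * (nn:ℝ)) * ((nn:ℝ) / Real.exp 1) ^ nn :=
    mul_pos (Real.sqrt_pos.mpr (by linarith)) (pow_pos (div_pos hn' (Real.exp_pos 1)) nn)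
  have hfact : ((Nat.factorial nn : ℕ) : ℝ) =
      stirlingSeq nn * (Real.sqrt (2 * (nn:ℝ)) * ((nn:ℝ) / Real.exp 1) ^ nn) := by
    rw [stirlingSeq, div_mul_cancel₀ _ hD.ne']
  have hsqrt : Real.sqrt (2 * Real.pi * (nn:ℝ)) =
      Real.sqrt Real.pi * Real.sqrt (2 * (nn:ℝ)) := by
    rw [show 2 * Real.pi * (nn:ℝ) = Real.pi * (2 * (nn:ℝ)) by ring,
      Real.sqrt_mul Real.pi_pos.le]
  have hcast : (12 * ((m:ℝ) + 1)) = 12 * (nn:ℝ) := by rw [hnn]; push_cast; ring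
  have hGamma : Real.Gamma ((nn:ℝ) + 1) = ((Nat.factorial nn : ℕ) : ℝ) := by
    exact_mod_cast Real.Gamma_nat_eq_factorial nn
  constructor
  · have h1 := hv_gt m
    rw [hcast] at h1
    have h1' : L + 1 / (12 * (nn:ℝ) + 1) < Real.log (stirlingSeq nn) := by linarith
    have h2 : Real.sqrt Real.pi * Real.exp (1 / (12 * (nn:ℝ) + 1)) < stirlingSeq nn := by
      have := Real.exp_lt_exp.mpr h1'
      rwa [Real.exp_add, hL, Real.exp_log hpi, Real.exp_log hs] at this
    rw [hGamma, hfact, hsqrt]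
    calc Real.sqrt Real.pi * Real.sqrt (2 * (nn:ℝ)) * ((nn:ℝ) / Real.exp 1) ^ nn *
          Real.exp (1 / (12 * (nn:ℝ) + 1))
        = (Real.sqrt Real.pi * Real.exp (1 / (12 * (nn:ℝ) + 1))) *
          (Real.sqrt (2 * (nn:ℝ)) * ((nn:ℝ) / Real.exp 1) ^ nn) := by ring
      _ < stirlingSeq nn * (Real.sqrt (2 * (nn:ℝ)) * ((nn:ℝ) / Real.exp 1) ^ nn) :=
          mul_lt_mul_of_pos_right h2 hD
  · have h1 := hu_lt m
    rw [hcast] at h1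
    have h1' : Real.log (stirlingSeq nn) < L + 1 / (12 * (nn:ℝ)) := by linarith
    have h2 : stirlingSeq nn < Real.sqrt Real.pi * Real.exp (1 / (12 * (nn:ℝ))) := by
      have := Real.exp_lt_exp.mpr h1'
      rwa [Real.exp_add, hL, Real.exp_log hpi, Real.exp_log hs] at this
    rw [hGamma, hfact, hsqrt]
    calc stirlingSeq nn * (Real.sqrt (2 * (nn:ℝ)) * ((nn:ℝ) / Real.exp 1) ^ nn)
        < (Real.sqrt Real.pi * Real.exp (1 / (12 * (nn:ℝ)))) *
          (Real.sqrt (2 * (nn:ℝ)) * ((nn:ℝ) / Real.exp 1) ^ nn) :=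
          mul_lt_mul_of_pos_right h2 hD
      _ = Real.sqrt Real.pi * Real.sqrt (2 * (nn:ℝ)) * ((nn:ℝ) / Real.exp 1) ^ nn *
          Real.exp (1 / (12 * (nn:ℝ))) := by ring
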